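/- For the type-D data Ψ_{ABCD} = 6μ o_{(A} o_B ι_C ι_{D)}, Φ_{ABA'B'} = 4φ o_{(A} ι_{B)} ō_{(A'} ῑ_{B')}, and R = -12μ, with o_A ι^A = 1, the Ricci semi-symmetry identity holds: 24 Ψ_{ABC}^{\;\;E} Φ_{EDC'D'} + 24 Ψ_{ABD}^{\;\;E} Φ_{CEC'D'} + R(ε_{AC} Φ_{BDC'D'} + ε_{BC} Φ_{ADC'D'} + ε_{AD} Φ_{BCC'D'} + ε_{BD} Φ_{ACC'D'}) = 0. -/

import Mathlib

open scoped BigOperators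

noncomputable section

/-- Components of a covector (one-index spinor) over spin space `S = ℂ²`. -/
abbrev Sp := Fin 2 → ℂ

/-- A 4-index spinor (all indices of the same 2-dimensional type). -/
abbrev Tensor4 := Fin 2 → Fin 2 → Fin 2 → Fin 2 → ℂ

/-- The symplectic form ε, with ε₀₁ = 1 = -ε₁₀. -/
def eps : Fin 2 → Fin 2 → ℂ := ![![0, 1], ![-1, 0]]

/-- Index raising: `(up α) A = ε^{AB} α_B`. -/
def up (α : Sp) : Sp := fun A => ∑ B, eps A B * α B

/-- The ε-pairing `α_A β^A`. -/
def pair (α β : Sp) : ℂ := ∑ A, α A * up β A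

/-- Complex conjugate spinor (components in the conjugate spin space). -/
def conjSp (α : Sp) : Sp := fun A => (starRingEnd ℂ) (α A)

/-- Total symmetrization of a 4-index spinor (with the 1/4! normalization). -/
def symz (T : Tensor4) : Tensor4 := fun A B C D =>
  (1 / 24 : ℂ) * ∑ σ : Equiv.Perm (Fin 4),
    T (![A, B, C, D] (σ 0)) (![A, B, C, D] (σ 1)) (![A, B, C, D] (σ 2)) (![A, B, C, D] (σ 3))

/-- Symmetrized product `α_{(A} β_B γ_C δ_{D)}` of four one-index spinors. -/
def Sym4 (α β γ δ : Sp) : Tensor4 :=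
  symz (fun A B C D => α A * β B * γ C * δ D)

/-- Total symmetry of a 4-index spinor. -/
def TotSym4 (Ψ : Tensor4) : Prop :=
  ∀ A B C D, Ψ A B C D = Ψ B A C D ∧ Ψ A B C D = Ψ A C B D ∧ Ψ A B C D = Ψ A B D C

/-- The contraction `Ψ_{AD}{}^{BG} Ψ_{EFBG}` (indices raised with ε). -/
def Qc (Ψ : Tensor4) : Tensor4 := fun A D E F =>
  ∑ B, ∑ G, ∑ P, ∑ Q, eps B P * eps G Q * Ψ A D P Q * Ψ E F B G

open Equiv in
lemma sum_perm_succ' {n : ℕ} (f : Equiv.Perm (Fin (n+1)) → ℂ) :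
    ∑ σ : Equiv.Perm (Fin (n+1)), f σ =
      ∑ p : Fin (n+1), ∑ e : Equiv.Perm (Fin n), f (Equiv.Perm.decomposeFin.symm (p, e)) := by
  rw [← Equiv.sum_comp (Equiv.Perm.decomposeFin.symm) f, Fintype.sum_prod_type]

lemma sum_perm_one' (f : Equiv.Perm (Fin 1) → ℂ) : ∑ σ : Equiv.Perm (Fin 1), f σ = f 1 := by
  rw [Fintype.sum_subsingleton _ 1]

lemma sum_perm_four' (f : Equiv.Perm (Fin 4) → ℂ) :
    ∑ σ : Equiv.Perm (Fin 4), f σ =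
      ∑ p : Fin 4, ∑ q : Fin 3, ∑ r : Fin 2,
        f (Equiv.Perm.decomposeFin.symm (p, Equiv.Perm.decomposeFin.symm (q,
            Equiv.Perm.decomposeFin.symm (r, 1)))) := by
  rw [sum_perm_succ']
  refine Finset.sum_congr rfl fun p _ => ?_
  rw [sum_perm_succ' (fun e => f (Equiv.Perm.decomposeFin.symm (p, e)))]
  refine Finset.sum_congr rfl fun q _ => ?_
  rw [sum_perm_succ' (fun e => f (Equiv.Perm.decomposeFin.symm (p, Equiv.Perm.decomposeFin.symm (q, e))))]
  refine Finset.sum_congr rfl fun r _ => ?_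
  rw [sum_perm_one' (fun e => f (Equiv.Perm.decomposeFin.symm (p, Equiv.Perm.decomposeFin.symm (q, Equiv.Perm.decomposeFin.symm (r, e)))))]

set_option maxHeartbeats 1000000 in
lemma Sym4_ooii' (o ι : Sp) (A B C D : Fin 2) :
    Sym4 o o ι ι A B C D = (1/6 : ℂ) *
      (o A * o B * ι C * ι D + o A * o C * ι B * ι D + o A * o D * ι B * ι C +
       o B * o C * ι A * ι D + o B * o D * ι A * ι C + o C * o D * ι A * ι B) := by
  simp only [Sym4, symz, sum_perm_four', Fin.sum_univ_four, Fin.sum_univ_three, Fin.sum_univ_two]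
  simp (config := { decide := true }) only [
    show (1:Fin 4) = (0:Fin 3).succ from rfl, show (2:Fin 4) = (1:Fin 3).succ from rfl,
    show (3:Fin 4) = (2:Fin 3).succ from rfl,
    show (1:Fin 3) = (0:Fin 2).succ from rfl, show (2:Fin 3) = (1:Fin 2).succ from rfl,
    show (1:Fin 2) = (0:Fin 1).succ from rfl,
    Equiv.Perm.decomposeFin_symm_apply_zero, Equiv.Perm.decomposeFin_symm_apply_succ,
    Equiv.Perm.decomposeFin_symm_of_one, Equiv.Perm.one_apply, Equiv.swap_apply_def,
    Fin.ext_iff, Fin.val_succ, Fin.val_zero, Fin.val_one,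
    Matrix.cons_val_zero, Matrix.cons_val_one, Matrix.cons_val_succ, Matrix.head_cons]
  norm_num
  simp only [Matrix.cons_val_two, Matrix.tail_cons, Matrix.head_cons]
  ring

/-- for type-D data `Ψ = 6μ o_{(A}o_B ι_C ι_{D)}`,
`Φ = 4φ o_{(A}ι_{B)} ō_{(A'}ῑ_{B')}`, `R = -12μ`, with `o_A ι^A = 1`, the
Ricci semi-symmetry identity holds. -/
theorem type_D_Ricci_semisymmetry_identity (o ι : Sp) (μ φ R : ℂ) (Ψ Φ : Tensor4)
    (hnorm : pair o ι = 1)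
    (hΨ : ∀ A B C D, Ψ A B C D = 6 * μ * Sym4 o o ι ι A B C D)
    (hΦ : ∀ A B A' B', Φ A B A' B' = 4 * φ * ((o A * ι B + o B * ι A) / 2) *
        ((conjSp o A' * conjSp ι B' + conjSp o B' * conjSp ι A') / 2))
    (hR : R = -12 * μ) :
    ∀ A B C D C' D',
      24 * (∑ E, ∑ F, eps E F * Ψ A B C F * Φ E D C' D') +
      24 * (∑ E, ∑ F, eps E F * Ψ A B D F * Φ C E C' D') +
      R * (eps A C * Φ B D C' D' + eps B C * Φ A D C' D' +
           eps A D * Φ B C C' D' + eps B D * Φ A C C' D') = 0 := by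
  have hnorm' : o 0 * ι 1 + -(o 1 * ι 0) = 1 := by
    simpa [pair, up, eps, Fin.sum_univ_two] using hnorm
  have heps : ∀ X Y, eps X Y = o X * ι Y - ι X * o Y := by
    simp only [Fin.forall_fin_two]
    refine ⟨⟨by simp [eps]; ring, by simp [eps]; linear_combination -hnorm'⟩,
      by simp [eps]; linear_combination hnorm', by simp [eps]; ring⟩
  intro A B C D C' D'
  rw [heps A C, heps B C, heps A D, heps B D]
  simp only [hΨ, hΦ, hR, Sym4_ooii', Fin.sum_univ_two, eps,
    Matrix.cons_val_zero, Matrix.cons_val_one, Matrix.head_cons]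
  linear_combination (48*μ*φ*((conjSp o C' * conjSp ι D' + conjSp o D' * conjSp ι C')/2) *
    ((o A*o B*ι C + o A*o C*ι B + o B*o C*ι A) * ι D
      - (o A*ι B*ι C + o B*ι A*ι C + o C*ι A*ι B) * o D
      + (o A*o B*ι D + o A*o D*ι B + o B*o D*ι A) * ι C
      - (o A*ι B*ι D + o B*ι A*ι D + o D*ι A*ι B) * o C)) * hnorm'
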